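/- arXiv:2409.12824 — 7 statements merged into one kernel-verified Lean document; each statement's English description precedes it below -/
import Mathlib

section
/- Theorem 1 (per-agent core, exact data). Fix T, n, m ∈ ℕ with n ≥ 1. Let X ∈ ℝ^{n×T}, U ∈ ℝ^{m×T} and G ∈ ℝ^{n×T} be given, and assume there exists at least one pair (A,B) ∈ ℝ^{n×n}×ℝ^{n×m} that is consistent with the data, i.e. AX + BU = G. Then the following are equivalent: (i) the data are informative for stabilizability, i.e. there exists K ∈ ℝ^{m×n} such that A + BK is Hurwitz for every pair (A,B) with AX + BU = G; (ii) there exists a right inverse X⁺ ∈ ℝ^{T×n} of X (i.e. X X⁺ = Iₙ) such that G X⁺ is Hurwitz. Moreover, when (ii) holds, K = U X⁺ is such a common stabilizing gain. -/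
open Matrix

/-- A real square matrix is Hurwitz (stable) if every eigenvalue over `ℂ`
(i.e. every root of its characteristic polynomial over `ℂ`) has negative real part. -/
def IsHurwitz {ι : Type} [Fintype ι] [DecidableEq ι] (M : Matrix ι ι ℝ) : Prop :=
  ∀ z : ℂ, (M.map Complex.ofReal).charpoly.IsRoot z → z.re < 0

/-- A nonempty multiset of negative reals has negative sum. -/
lemma multiset_sum_neg : ∀ s : Multiset ℝ, s ≠ 0 → (∀ x ∈ s, x < 0) → s.sum < 0 := by
  intro s
  induction s using Multiset.induction_on with
  | empty => intro h0 _; exact absurd rfl h0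
  | cons a t ih =>
    intro _ h
    rw [Multiset.sum_cons]
    have ha := h a (Multiset.mem_cons_self a t)
    rcases eq_or_ne t 0 with rfl | ht
    · simpa using ha
    · have := ih ht (fun x hx => h x (Multiset.mem_cons_of_mem hx))
      linarith

/-- A Hurwitz matrix has negative trace. -/
lemma trace_neg_of_isHurwitz {n : ℕ} (hn : 1 ≤ n) {M : Matrix (Fin n) (Fin n) ℝ}
    (h : IsHurwitz M) : M.trace < 0 := by
  have hne : Nonempty (Fin n) := ⟨⟨0, hn⟩⟩
  set Mc := M.map (Complex.ofReal) with hMc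
  have h1 : Mc.trace = Mc.charpoly.roots.sum := Matrix.trace_eq_sum_roots_charpoly Mc
  have hsp : Mc.charpoly.Splits := IsAlgClosed.splits _
  have hcard : Mc.charpoly.roots.card = n := by
    rw [Polynomial.splits_iff_card_roots.mp hsp, Matrix.charpoly_natDegree_eq_dim,
      Fintype.card_fin]
  have h2 : Mc.trace = (M.trace : ℂ) := by
    simp [Matrix.trace, Matrix.diag, hMc, Matrix.map_apply]
  have h3 : M.trace = (Mc.charpoly.roots.map Complex.re).sum := by
    have hre := congrArg Complex.re (h2.symm.trans h1)
    rw [Complex.ofReal_re] at hre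
    rw [hre, ← Complex.coe_reAddGroupHom]
    exact map_multiset_sum _ _
  rw [h3]
  apply multiset_sum_neg
  · intro h0
    have hz : Mc.charpoly.roots = 0 := by simpa using h0
    rw [hz] at hcard
    simp at hcard
    omega
  · intro x hx
    obtain ⟨z, hz, rfl⟩ := Multiset.mem_map.mp hx
    exact h z (Polynomial.mem_roots'.mp hz).2

/-- Factorization of linear maps through a linear map with smaller kernel. -/
lemma exists_factor {K V W P : Type*} [Field K] [AddCommGroup V] [Module K V]
    [AddCommGroup W] [Module K W] [AddCommGroup P] [Module K P]
    (f : V →ₗ[K] W) (g : V →ₗ[K] P) (hk : LinearMap.ker f ≤ LinearMap.ker g) :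
    ∃ h : W →ₗ[K] P, ∀ x, h (f x) = g x := by
  obtain ⟨h0, hh0⟩ := LinearMap.exists_extend
    ((((LinearMap.ker f).liftQ g hk).comp
      (f.quotKerEquivRange.symm : LinearMap.range f →ₗ[K] V ⧸ LinearMap.ker f)))
  refine ⟨h0, fun x => ?_⟩
  have h2 := LinearMap.congr_fun hh0 ⟨f x, LinearMap.mem_range_self f x⟩
  simpa using h2

lemma vecMulVec_mul {n T k : ℕ} (w : Fin n → ℝ) (ξ : Fin k → ℝ)
    (X : Matrix (Fin k) (Fin T) ℝ) :
    vecMulVec w ξ * X = vecMulVec w (ξ ᵥ* X) := by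
  ext i j
  simp [Matrix.mul_apply, Matrix.vecMulVec_apply, Matrix.vecMul, dotProduct,
    Finset.mul_sum, mul_assoc]

lemma vecMulVec_add_right {n k : ℕ} (w : Fin n → ℝ) (a b : Fin k → ℝ) :
    vecMulVec w a + vecMulVec w b = vecMulVec w (a + b) := by
  ext i j
  simp [Matrix.vecMulVec_apply, mul_add]

/-- Theorem 1 (per-agent core, exact data): informativity for stabilizability is
equivalent to the existence of a right inverse `X⁺` of `X` with `G X⁺` Hurwitz;
moreover `K = U X⁺` is then a common stabilizing gain. -/
theorem stmt_0 (T n m : ℕ) (hn : 1 ≤ n)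
    (X G : Matrix (Fin n) (Fin T) ℝ) (U : Matrix (Fin m) (Fin T) ℝ)
    (hcons : ∃ (A : Matrix (Fin n) (Fin n) ℝ) (B : Matrix (Fin n) (Fin m) ℝ),
      A * X + B * U = G) :
    ((∃ K : Matrix (Fin m) (Fin n) ℝ,
        ∀ (A : Matrix (Fin n) (Fin n) ℝ) (B : Matrix (Fin n) (Fin m) ℝ),
          A * X + B * U = G → IsHurwitz (A + B * K)) ↔
      (∃ Xp : Matrix (Fin T) (Fin n) ℝ, X * Xp = 1 ∧ IsHurwitz (G * Xp))) ∧
    (∀ Xp : Matrix (Fin T) (Fin n) ℝ, X * Xp = 1 → IsHurwitz (G * Xp) →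
      ∀ (A : Matrix (Fin n) (Fin n) ℝ) (B : Matrix (Fin n) (Fin m) ℝ),
        A * X + B * U = G → IsHurwitz (A + B * (U * Xp))) := by
  have hpart2 : ∀ Xp : Matrix (Fin T) (Fin n) ℝ, X * Xp = 1 → IsHurwitz (G * Xp) →
      ∀ (A : Matrix (Fin n) (Fin n) ℝ) (B : Matrix (Fin n) (Fin m) ℝ),
        A * X + B * U = G → IsHurwitz (A + B * (U * Xp)) := by
    intro Xp hXp hH A B hAB
    have : A + B * (U * Xp) = G * Xp := by
      calc A + B * (U * Xp) = A * (X * Xp) + B * (U * Xp) := by rw [hXp, mul_one]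
        _ = (A * X + B * U) * Xp := by rw [Matrix.add_mul, Matrix.mul_assoc, Matrix.mul_assoc]
        _ = G * Xp := by rw [hAB]
    rw [this]; exact hH
  refine ⟨⟨?_, ?_⟩, hpart2⟩
  · -- forward direction
    rintro ⟨K, hK⟩
    obtain ⟨A₀, B₀, hAB0⟩ := hcons
    -- the key kernel inclusion
    have hker : ∀ (ξ : Fin n → ℝ) (η : Fin m → ℝ),
        ξ ᵥ* X + η ᵥ* U = 0 → ξ + η ᵥ* K = 0 := by
      intro ξ η h0
      by_contra hw
      set w := ξ + η ᵥ* K with hwdef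
      set c := ∑ i, w i * w i with hc
      have hcpos : 0 < c := by
        obtain ⟨j, hj⟩ := Function.ne_iff.mp hw
        exact Finset.sum_pos' (fun i _ => mul_self_nonneg (w i))
          ⟨j, Finset.mem_univ j, mul_self_pos.mpr hj⟩
      -- for every t, the perturbed pair is consistent
      have htr : ∀ t : ℝ, (A₀ + B₀ * K).trace + t * c < 0 := by
        intro t
        have hcons' : (A₀ + t • vecMulVec w ξ) * X + (B₀ + t • vecMulVec w η) * U = G := by
          rw [Matrix.add_mul, Matrix.add_mul, Matrix.smul_mul, Matrix.smul_mul,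
            vecMulVec_mul, vecMulVec_mul]
          have hz : t • vecMulVec w (ξ ᵥ* X) + t • vecMulVec w (η ᵥ* U) = 0 := by
            rw [← smul_add, vecMulVec_add_right, h0]
            ext i j
            simp [Matrix.vecMulVec_apply]
          calc A₀ * X + t • vecMulVec w (ξ ᵥ* X) + (B₀ * U + t • vecMulVec w (η ᵥ* U))
              = A₀ * X + B₀ * U + (t • vecMulVec w (ξ ᵥ* X) + t • vecMulVec w (η ᵥ* U)) := by
                abel
            _ = G := by rw [hz, add_zero, hAB0]
        have hHur := hK _ _ hcons'
        have hcl : (A₀ + t • vecMulVec w ξ) + (B₀ + t • vecMulVec w η) * K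
            = (A₀ + B₀ * K) + t • vecMulVec w w := by
          rw [Matrix.add_mul, Matrix.smul_mul, vecMulVec_mul]
          have hsum : t • vecMulVec w ξ + t • vecMulVec w (η ᵥ* K) = t • vecMulVec w w := by
            rw [← smul_add, vecMulVec_add_right, ← hwdef]
          calc A₀ + t • vecMulVec w ξ + (B₀ * K + t • vecMulVec w (η ᵥ* K))
              = A₀ + B₀ * K + (t • vecMulVec w ξ + t • vecMulVec w (η ᵥ* K)) := by abel
            _ = A₀ + B₀ * K + t • vecMulVec w w := by rw [hsum]
        rw [hcl] at hHur
        have := trace_neg_of_isHurwitz hn hHur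
        rw [Matrix.trace_add, Matrix.trace_smul] at this
        have htrw : (vecMulVec w w).trace = c := by
          simp [Matrix.trace, Matrix.diag, Matrix.vecMulVec_apply, hc]
        rw [htrw] at this
        simpa [smul_eq_mul] using this
      have h1 := htr ((1 - (A₀ + B₀ * K).trace) / c)
      rw [div_mul_cancel₀ _ (ne_of_gt hcpos)] at h1
      linarith
    -- build the right inverse from the kernel inclusion
    let f : ((Fin n → ℝ) × (Fin m → ℝ)) →ₗ[ℝ] (Fin T → ℝ) :=
      X.vecMulLinear.comp (LinearMap.fst ℝ _ _) + U.vecMulLinear.comp (LinearMap.snd ℝ _ _)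
    let g : ((Fin n → ℝ) × (Fin m → ℝ)) →ₗ[ℝ] (Fin n → ℝ) :=
      LinearMap.fst ℝ _ _ + K.vecMulLinear.comp (LinearMap.snd ℝ _ _)
    have hfg : LinearMap.ker f ≤ LinearMap.ker g := by
      rintro ⟨ξ, η⟩ hmem
      rw [LinearMap.mem_ker] at hmem ⊢
      exact hker ξ η hmem
    obtain ⟨h, hh⟩ := exists_factor f g hfg
    set Xp : Matrix (Fin T) (Fin n) ℝ :=
      Matrix.of (fun t j => h (Pi.single t 1) j) with hXpdef
    have hvm : ∀ y : Fin T → ℝ, y ᵥ* Xp = h y := by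
      intro y
      have hy : y = ∑ t, y t • (Pi.single t 1 : Fin T → ℝ) := by
        funext j
        rw [Finset.sum_apply]
        simp [Pi.single_apply]
      funext j
      rw [show h y = h (∑ t, y t • (Pi.single t 1 : Fin T → ℝ)) from by rw [← hy]]
      rw [map_sum]
      simp only [_root_.map_smul]
      rw [Matrix.vecMul, Finset.sum_apply]
      simp [dotProduct, hXpdef]
    have hXXp : X * Xp = 1 := by
      ext i j
      have h1 : (X * Xp) i j = (X i ᵥ* Xp) j := by
        simp [Matrix.mul_apply, Matrix.vecMul, dotProduct]
      have h2 : X i = f (Pi.single i 1, 0) := by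
        simp [f, Matrix.vecMulLinear, Matrix.single_one_vecMul, Matrix.row]
      rw [h1, hvm, h2, hh]
      simp [g, Matrix.one_apply, Pi.single_apply, eq_comm]
    have hUXp : U * Xp = K := by
      ext i j
      have h1 : (U * Xp) i j = (U i ᵥ* Xp) j := by
        simp [Matrix.mul_apply, Matrix.vecMul, dotProduct]
      have h2 : U i = f (0, Pi.single i 1) := by
        simp [f, Matrix.vecMulLinear, Matrix.single_one_vecMul, Matrix.row]
      rw [h1, hvm, h2, hh]
      simp [g, Matrix.single_one_vecMul]
    refine ⟨Xp, hXXp, ?_⟩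
    have : G * Xp = A₀ + B₀ * K := by
      rw [← hAB0, Matrix.add_mul, Matrix.mul_assoc, Matrix.mul_assoc, hXXp, hUXp, Matrix.mul_one]
    rw [this]
    exact hK A₀ B₀ hAB0
  · rintro ⟨Xp, hXp, hH⟩
    exact ⟨U * Xp, fun A B hAB => hpart2 Xp hXp hH A B hAB⟩
end

section
/- M-matrix eigenvalue bound (inequality min Re(λ_H) ≥ 1/‖H⁻¹‖_∞ used in the proof of Theorem 3). Let N ≥ 1 and let H ∈ ℝ^{N×N} be an invertible matrix with H_{ij} ≤ 0 for all i ≠ j and with H⁻¹ entrywise nonnegative. Then every eigenvalue ν of H over ℂ satisfies Re ν ≥ 1/‖H⁻¹‖_∞, where ‖A‖_∞ = max_i Σ_j |A_{ij}| is the maximum absolute row-sum norm. -/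
open Matrix

/-- M-matrix eigenvalue bound: if `H` has nonpositive off-diagonal entries and an
entrywise nonnegative inverse, then every eigenvalue `ν` of `H` over `ℂ` satisfies
`Re ν ≥ 1 / ‖H⁻¹‖_∞`, where `‖A‖_∞ = max_i Σ_j |A i j|` is the maximum absolute
row-sum norm. -/
theorem stmt_4 (N : ℕ) (hN : 1 ≤ N)
    (H : Matrix (Fin N) (Fin N) ℝ) (hHinv : IsUnit H.det)
    (hoff : ∀ i j : Fin N, i ≠ j → H i j ≤ 0)
    (hinvnonneg : ∀ i j : Fin N, 0 ≤ H⁻¹ i j) :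
    ∀ v : ℂ, (H.map Complex.ofReal).charpoly.IsRoot v →
      1 / (⨆ i : Fin N, ∑ j : Fin N, |H⁻¹ i j|) ≤ v.re := by
  intro v hv
  haveI : NeZero N := ⟨by omega⟩
  set Hc : Matrix (Fin N) (Fin N) ℂ := H.map Complex.ofReal with hHcdef
  -- determinant vanishes
  have hdet : (v • (1 : Matrix (Fin N) (Fin N) ℂ) - Hc).det = 0 := by
    have h1 : ((Polynomial.evalRingHom v).mapMatrix (charmatrix Hc)).det
        = Polynomial.eval v (charmatrix Hc).det := ((RingHom.map_det _ _)).symm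
    have h2 : (Polynomial.evalRingHom v).mapMatrix (charmatrix Hc)
        = v • (1 : Matrix (Fin N) (Fin N) ℂ) - Hc := by
      ext i j
      by_cases h : i = j
      · subst h; simp [charmatrix_apply_eq]
      · simp [charmatrix_apply_ne _ _ _ h, h]
    rw [h2] at h1
    rw [h1]
    exact hv
  -- eigenvector
  obtain ⟨x, hx0, hx⟩ := (Matrix.exists_mulVec_eq_zero_iff).mpr hdet
  have heig : ∀ i, v * x i = ∑ j, (H i j : ℂ) * x j := by
    intro i
    have := congrFun hx i
    simp only [sub_mulVec, smul_mulVec, one_mulVec, Pi.sub_apply, Pi.smul_apply,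
      smul_eq_mul, Pi.zero_apply, sub_eq_zero] at this
    rw [this]
    simp [mulVec, dotProduct, hHcdef, Matrix.map_apply]
  -- the vector w
  set w : Fin N → ℝ := fun i => ∑ j, H⁻¹ i j with hwdef
  have hHw : ∀ i, ∑ j, H i j * w j = 1 := by
    intro i
    have h1 : H.mulVec (H⁻¹.mulVec (fun _ => 1)) = (fun _ => (1:ℝ)) := by
      rw [mulVec_mulVec, Matrix.mul_nonsing_inv H hHinv, one_mulVec]
    have h2 : H⁻¹.mulVec (fun _ => (1:ℝ)) = w := by
      funext k; simp [mulVec, dotProduct, hwdef]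
    rw [h2] at h1
    have := congrFun h1 i
    simpa [mulVec, dotProduct] using this
  have hwpos : ∀ i, 0 < w i := by
    intro i
    rcases lt_or_eq_of_le (Finset.sum_nonneg fun j _ => hinvnonneg i j) with h | h
    · exact h
    · exfalso
      have hz : ∀ j ∈ Finset.univ, H⁻¹ i j = 0 :=
        (Finset.sum_eq_zero_iff_of_nonneg fun j _ => hinvnonneg i j).mp h.symm
      have h1 : (H⁻¹ * H) i i = 1 := by
        rw [Matrix.nonsing_inv_mul H hHinv]; simp
      rw [Matrix.mul_apply] at h1
      have : ∑ k, H⁻¹ i k * H k i = 0 :=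
        Finset.sum_eq_zero fun k _ => by rw [hz k (Finset.mem_univ k), zero_mul]
      rw [this] at h1
      exact zero_ne_one h1
  -- the sup
  have habs : (⨆ i : Fin N, ∑ j : Fin N, |H⁻¹ i j|) = ⨆ i, w i := by
    congr 1; funext i
    exact Finset.sum_congr rfl fun j _ => abs_of_nonneg (hinvnonneg i j)
  set c : ℝ := ⨆ i, w i with hcdef
  have hwc : ∀ i, w i ≤ c := fun i => le_ciSup (Set.Finite.bddAbove (Set.finite_range w)) i
  -- choose maximizing index
  obtain ⟨i, hi⟩ := Finite.exists_max (fun j => ‖x j‖ / w j)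
  set t : ℝ := ‖x i‖ / w i with htdef
  have ht0 : 0 < t := by
    obtain ⟨k, hk⟩ : ∃ k, x k ≠ 0 := by
      by_contra h
      push_neg at h
      exact hx0 (funext h)
    calc (0:ℝ) < ‖x k‖ / w k :=
          div_pos (by simpa using hk) (hwpos k)
      _ ≤ t := hi k
  have hxb : ∀ j, ‖x j‖ ≤ t * w j := by
    intro j
    exact (div_le_iff₀ (hwpos j)).mp (hi j)
  have hxi : ‖x i‖ = t * w i := by
    rw [htdef, div_mul_cancel₀ _ (hwpos i).ne']
  -- Gershgorin estimate
  have hkey : ‖v - (H i i : ℂ)‖ * (t * w i) ≤ t * (H i i * w i - 1) := by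
    have hsplit : (v - (H i i : ℂ)) * x i = ∑ j ∈ Finset.univ.erase i, (H i j : ℂ) * x j := by
      have := heig i
      rw [← Finset.add_sum_erase _ _ (Finset.mem_univ i)] at this
      rw [sub_mul, this]
      ring
    calc ‖v - (H i i : ℂ)‖ * (t * w i)
        = ‖(v - (H i i : ℂ)) * x i‖ := by rw [norm_mul, hxi]
      _ = ‖∑ j ∈ Finset.univ.erase i, (H i j : ℂ) * x j‖ := by rw [hsplit]
      _ ≤ ∑ j ∈ Finset.univ.erase i, ‖(H i j : ℂ) * x j‖ :=
          norm_sum_le _ _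
      _ ≤ ∑ j ∈ Finset.univ.erase i, (-(H i j)) * (t * w j) := by
          apply Finset.sum_le_sum
          intro j hj
          rw [norm_mul, Complex.norm_real, Real.norm_eq_abs,
            abs_of_nonpos (hoff i j (Finset.ne_of_mem_erase hj).symm)]
          exact mul_le_mul_of_nonneg_left (hxb j) (neg_nonneg.mpr (hoff i j (Finset.ne_of_mem_erase hj).symm))
      _ = t * (∑ j ∈ Finset.univ.erase i, (-(H i j)) * w j) := by
          rw [Finset.mul_sum]; apply Finset.sum_congr rfl; intro j _; ring
      _ = t * (H i i * w i - 1) := by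
          congr 1
          have := hHw i
          rw [← Finset.add_sum_erase _ _ (Finset.mem_univ i)] at this
          have h2 : ∑ j ∈ Finset.univ.erase i, H i j * w j = 1 - H i i * w i := by
            linarith
          calc ∑ j ∈ Finset.univ.erase i, (-(H i j)) * w j
              = -∑ j ∈ Finset.univ.erase i, H i j * w j := by
                rw [← Finset.sum_neg_distrib]; apply Finset.sum_congr rfl; intro j _; ring
            _ = H i i * w i - 1 := by rw [h2]; ring
  have hkey2 : ‖v - (H i i : ℂ)‖ ≤ H i i - 1 / w i := by
    have h1 : ‖v - (H i i : ℂ)‖ * w i ≤ H i i * w i - 1 := by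
      have h := hkey
      rw [show ‖v - (H i i : ℂ)‖ * (t * w i)
          = t * (‖v - (H i i : ℂ)‖ * w i) from by ring] at h
      exact le_of_mul_le_mul_left h ht0
    have h2 : (H i i - 1 / w i) * w i = H i i * w i - 1 := by
      rw [sub_mul, div_mul_cancel₀ _ (hwpos i).ne']
    exact le_of_mul_le_mul_right (by rw [h2]; exact h1) (hwpos i)
  have hre : 1 / w i ≤ v.re := by
    have h1 : |v.re - H i i| ≤ ‖v - (H i i : ℂ)‖ := by
      have := Complex.abs_re_le_norm (v - (H i i : ℂ))
      simpa using this
    have h2 := abs_le.mp (h1.trans hkey2)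
    linarith [h2.1]
  rw [habs]
  calc 1 / c ≤ 1 / w i := one_div_le_one_div_of_le (hwpos i) (hwc i)
    _ ≤ v.re := hre
end

section
/- Proposition 1 (unknown exosystem matrix, conditional matrix form). Let N, q ≥ 1, ε₁, ε₂, ε > 0. Let H ∈ ℝ^{N×N} be a matrix every eigenvalue ν of which satisfies Re ν ≥ ε₁^N / (N·(2ε₂)^{N−1}), and let S ∈ ℝ^{q×q} be a matrix all of whose entries satisfy |S_{ij}| ≤ ε. If the real number μ satisfies μ > q·ε·N·(2ε₂)^{N−1} / ε₁^N, then the matrix I_N ⊗ S − μ (H ⊗ I_q) is Hurwitz. (In particular the proof shows that every eigenvalue λ of S satisfies Re λ ≤ ‖S‖_∞ ≤ qε.) -/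
open Matrix Polynomial
open scoped Kronecker

lemma charpoly_isRoot_iff {n : Type*} [Fintype n] [DecidableEq n]
    (M : Matrix n n ℂ) (z : ℂ) :
    M.charpoly.IsRoot z ↔ ∃ v : n → ℂ, v ≠ 0 ∧ M *ᵥ v = z • v := by
  have h1 : M.charpoly.eval z = (Matrix.scalar n z - M).det := by
    rw [Matrix.charpoly, eval_det, matPolyEquiv_charmatrix]
    simp
  have h2 : ∀ v : n → ℂ, (Matrix.scalar n z - M) *ᵥ v = z • v - M *ᵥ v := by
    intro v
    rw [Matrix.sub_mulVec]
    congr 1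
    funext i
    simp [Matrix.scalar_apply, Matrix.mulVec_diagonal, Pi.algebraMap_apply]
  rw [Polynomial.IsRoot, h1, ← Matrix.exists_mulVec_eq_zero_iff]
  constructor
  · rintro ⟨v, hv, hv2⟩
    exact ⟨v, hv, by rw [h2 v] at hv2; linear_combination (norm := module) -hv2⟩
  · rintro ⟨v, hv, hv2⟩
    exact ⟨v, hv, by rw [h2 v, hv2, sub_self]⟩


lemma eig_add_of_commute {n : Type*} [Fintype n] [DecidableEq n]
    (A B : Matrix n n ℂ) (hAB : A * B = B * A) (z : ℂ)
    (v : n → ℂ) (hv : v ≠ 0) (hv2 : (A + B) *ᵥ v = z • v) :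
    ∃ α : ℂ, (∃ u : n → ℂ, u ≠ 0 ∧ A *ᵥ u = α • u) ∧
      ∃ w : n → ℂ, w ≠ 0 ∧ B *ᵥ w = (z - α) • w := by
  classical
  set f := Matrix.toLin' A with hf
  set g := Matrix.toLin' B with hg
  have hfg : ∀ x : n → ℂ, g (f x) = f (g x) := by
    intro x
    have h1 : Matrix.toLin' (B * A) x = Matrix.toLin' (A * B) x := by rw [hAB]
    simpa [Matrix.toLin'_mul, hf, hg] using h1
  set E := Module.End.eigenspace (f + g) z with hEdef
  have hvE : v ∈ E := by
    rw [hEdef, Module.End.mem_eigenspace_iff]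
    simpa [hf, hg, Matrix.toLin'_apply, Matrix.add_mulVec] using hv2
  have hinv : ∀ x ∈ E, f x ∈ E := by
    intro x hx
    rw [hEdef, Module.End.mem_eigenspace_iff] at hx ⊢
    have : (f + g) (f x) = f ((f + g) x) := by
      simp only [LinearMap.add_apply, map_add, hfg x]
    rw [this, hx, _root_.map_smul]
  haveI : Nontrivial E := nontrivial_of_ne ⟨v, hvE⟩ 0 (by simpa using hv)
  obtain ⟨α, hα⟩ := Module.End.exists_eigenvalue (LinearMap.restrict f hinv)
  obtain ⟨w, hw⟩ := hα.exists_hasEigenvector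
  have hw0 : (w : n → ℂ) ≠ 0 := by
    simpa [Submodule.coe_eq_zero] using hw.right
  have hfw : f (w : n → ℂ) = α • (w : n → ℂ) := by
    have := hw.apply_eq_smul
    exact congrArg Subtype.val this
  have hsum : (f + g) (w : n → ℂ) = z • (w : n → ℂ) :=
    Module.End.mem_eigenspace_iff.mp w.2
  have hgw : g (w : n → ℂ) = (z - α) • (w : n → ℂ) := by
    have : f (w : n → ℂ) + g (w : n → ℂ) = z • (w : n → ℂ) := by
      simpa [LinearMap.add_apply] using hsum
    rw [hfw] at this
    linear_combination (norm := module) this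
  refine ⟨α, ⟨w, hw0, ?_⟩, ⟨w, hw0, ?_⟩⟩
  · simpa [hf, Matrix.toLin'_apply] using hfw
  · simpa [hg, Matrix.toLin'_apply] using hgw


lemma kron_right_eig {N q : ℕ} (H : Matrix (Fin N) (Fin N) ℂ) (z : ℂ)
    (w : Fin N × Fin q → ℂ) (hw : w ≠ 0)
    (h : (H ⊗ₖ (1 : Matrix (Fin q) (Fin q) ℂ)) *ᵥ w = z • w) :
    ∃ u : Fin N → ℂ, u ≠ 0 ∧ H *ᵥ u = z • u := by
  obtain ⟨⟨i, j⟩, hij⟩ : ∃ p, w p ≠ 0 := by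
    by_contra h'; push_neg at h'; exact hw (funext h')
  refine ⟨fun k => w (k, j), fun hc => hij (congrFun hc i), ?_⟩
  funext k
  have := congrFun h (k, j)
  simpa [Matrix.mulVec, dotProduct, Fintype.sum_prod_type,
    Matrix.kroneckerMap_apply, Matrix.one_apply, mul_ite, ite_mul,
    Finset.sum_ite_eq, Finset.sum_ite_eq'] using this


lemma kron_left_eig {N q : ℕ} (S : Matrix (Fin q) (Fin q) ℂ) (z : ℂ)
    (w : Fin N × Fin q → ℂ) (hw : w ≠ 0)
    (h : ((1 : Matrix (Fin N) (Fin N) ℂ) ⊗ₖ S) *ᵥ w = z • w) :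
    ∃ u : Fin q → ℂ, u ≠ 0 ∧ S *ᵥ u = z • u := by
  obtain ⟨⟨i, j⟩, hij⟩ : ∃ p, w p ≠ 0 := by
    by_contra h'; push_neg at h'; exact hw (funext h')
  refine ⟨fun l => w (i, l), fun hc => hij (congrFun hc j), ?_⟩
  funext l
  have := congrFun h (i, l)
  simpa [Matrix.mulVec, dotProduct, Fintype.sum_prod_type,
    Matrix.kroneckerMap_apply, Matrix.one_apply, mul_ite, ite_mul,
    Finset.sum_ite_eq, Finset.sum_ite_eq'] using this


lemma gersh {q : ℕ} (hq : 1 ≤ q) (S : Matrix (Fin q) (Fin q) ℂ) (ε : ℝ)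
    (hS : ∀ i j, ‖S i j‖ ≤ ε) (z : ℂ) (v : Fin q → ℂ) (hv : v ≠ 0)
    (h : S *ᵥ v = z • v) : ‖z‖ ≤ q * ε := by
  haveI : Nonempty (Fin q) := ⟨⟨0, hq⟩⟩
  obtain ⟨i, hi⟩ := Finite.exists_max (fun i => ‖v i‖)
  have hvi : 0 < ‖v i‖ := by
    obtain ⟨j, hj⟩ : ∃ j, v j ≠ 0 := by
      by_contra h'; push_neg at h'; exact hv (funext h')
    exact lt_of_lt_of_le (norm_pos_iff.mpr hj) (hi j)
  have key : ‖z‖ * ‖v i‖ ≤ (q * ε) * ‖v i‖ := by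
    have h1 : z * v i = ∑ j, S i j * v j := by
      have := congrFun h i
      simp only [Matrix.mulVec, dotProduct, Pi.smul_apply, smul_eq_mul] at this
      exact this.symm
    calc ‖z‖ * ‖v i‖ = ‖z * v i‖ := (norm_mul z (v i)).symm
      _ = ‖∑ j, S i j * v j‖ := by rw [h1]
      _ ≤ ∑ j : Fin q, ‖S i j * v j‖ := norm_sum_le _ _
      _ ≤ ∑ _j : Fin q, ε * ‖v i‖ := by
          refine Finset.sum_le_sum fun j _ => ?_
          rw [norm_mul]
          exact mul_le_mul (hS i j) (hi j) (norm_nonneg _)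
            (le_trans (norm_nonneg _) (hS i i))
      _ = (q * ε) * ‖v i‖ := by
          rw [Finset.sum_const, Finset.card_univ, Fintype.card_fin]
          ring
  exact le_of_mul_le_mul_right key hvi


lemma map_main {N q : ℕ} (H : Matrix (Fin N) (Fin N) ℝ) (S : Matrix (Fin q) (Fin q) ℝ) (μ : ℝ) :
    ((1 : Matrix (Fin N) (Fin N) ℝ) ⊗ₖ S
      - μ • (H ⊗ₖ (1 : Matrix (Fin q) (Fin q) ℝ))).map Complex.ofReal
    = (1 : Matrix (Fin N) (Fin N) ℂ) ⊗ₖ (S.map Complex.ofReal)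
      + (-(μ : ℂ)) • ((H.map Complex.ofReal) ⊗ₖ (1 : Matrix (Fin q) (Fin q) ℂ)) := by
  ext ⟨a, b⟩ ⟨c, d⟩
  simp only [Matrix.map_apply, Matrix.sub_apply, Matrix.add_apply, Matrix.smul_apply,
    Matrix.kroneckerMap_apply, Matrix.one_apply, smul_eq_mul]
  by_cases h1 : a = c <;> by_cases h2 : b = d <;>
    simp [h1, h2, Complex.ofReal_sub, Complex.ofReal_mul] <;> ring


/-- Proposition 1 (unknown exosystem matrix): if every eigenvalue of `H` has real
part at least `ε₁^N/(N(2ε₂)^(N-1))`, all entries of `S` are bounded by `ε`, and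
`μ > qεN(2ε₂)^(N-1)/ε₁^N`, then `I_N ⊗ S − μ(H ⊗ I_q)` is Hurwitz; in particular
every eigenvalue `λ` of `S` satisfies `Re λ ≤ qε`. -/
theorem stmt_6 (N q : ℕ) (hN : 1 ≤ N) (hq : 1 ≤ q)
    (ε₁ ε₂ ε : ℝ) (hε₁ : 0 < ε₁) (hε₂ : 0 < ε₂) (hε : 0 < ε)
    (H : Matrix (Fin N) (Fin N) ℝ)
    (hH : ∀ v : ℂ, (H.map Complex.ofReal).charpoly.IsRoot v →
      ε₁ ^ N / (N * (2 * ε₂) ^ (N - 1)) ≤ v.re)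
    (S : Matrix (Fin q) (Fin q) ℝ) (hS : ∀ i j : Fin q, |S i j| ≤ ε)
    (μ : ℝ) (hμ : q * ε * N * (2 * ε₂) ^ (N - 1) / ε₁ ^ N < μ) :
    (∀ l : ℂ, (S.map Complex.ofReal).charpoly.IsRoot l → l.re ≤ q * ε) ∧
    IsHurwitz ((1 : Matrix (Fin N) (Fin N) ℝ) ⊗ₖ S
      - μ • (H ⊗ₖ (1 : Matrix (Fin q) (Fin q) ℝ))) := by
  have hS'norm : ∀ i j, ‖(S.map Complex.ofReal) i j‖ ≤ ε := by
    intro i j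
    simpa [Matrix.map_apply] using hS i j
  have hNpos : (0 : ℝ) < N := by exact_mod_cast Nat.lt_of_lt_of_le Nat.zero_lt_one hN
  have hqpos : (0 : ℝ) < q := by exact_mod_cast Nat.lt_of_lt_of_le Nat.zero_lt_one hq
  have hD : (0 : ℝ) < (N : ℝ) * (2 * ε₂) ^ (N - 1) := by positivity
  have hP : (0 : ℝ) < ε₁ ^ N := by positivity
  have hc : (0 : ℝ) < ε₁ ^ N / ((N : ℝ) * (2 * ε₂) ^ (N - 1)) := div_pos hP hD
  have hμpos : (0 : ℝ) < μ := by
    refine lt_trans ?_ hμ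
    have : (0 : ℝ) < q * ε * N * (2 * ε₂) ^ (N - 1) := by positivity
    exact div_pos this hP
  have hμ' : (q : ℝ) * ε * N * (2 * ε₂) ^ (N - 1) < μ * ε₁ ^ N := (div_lt_iff₀ hP).mp hμ
  have hkey : (q : ℝ) * ε < μ * (ε₁ ^ N / ((N : ℝ) * (2 * ε₂) ^ (N - 1))) := by
    rw [← mul_div_assoc, lt_div_iff₀ hD]
    nlinarith [hμ']
  have part1 : ∀ l : ℂ, (S.map Complex.ofReal).charpoly.IsRoot l → l.re ≤ q * ε := by
    intro l hl
    obtain ⟨v, hv, hv2⟩ := (charpoly_isRoot_iff _ l).mp hl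
    have hb := gersh hq (S.map Complex.ofReal) ε hS'norm l v hv hv2
    calc l.re ≤ ‖l‖ := (abs_le.1 (Complex.abs_re_le_norm l)).2
      _ = ‖l‖ := rfl
      _ ≤ q * ε := hb
  refine ⟨part1, ?_⟩
  intro z hz
  rw [map_main] at hz
  obtain ⟨v, hv, hv2⟩ := (charpoly_isRoot_iff _ z).mp hz
  set S' := S.map Complex.ofReal with hS'def
  set H' := H.map Complex.ofReal with hH'def
  have hcomm : ((1 : Matrix (Fin N) (Fin N) ℂ) ⊗ₖ S') * ((-(μ : ℂ)) • (H' ⊗ₖ 1))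
      = ((-(μ : ℂ)) • (H' ⊗ₖ 1)) * ((1 : Matrix (Fin N) (Fin N) ℂ) ⊗ₖ S') := by
    rw [Matrix.mul_smul, Matrix.smul_mul]
    congr 1
    rw [← Matrix.mul_kronecker_mul, ← Matrix.mul_kronecker_mul, one_mul, mul_one, one_mul, mul_one]
  obtain ⟨α, ⟨u, hu, hu2⟩, ⟨w, hw, hw2⟩⟩ :=
    eig_add_of_commute _ _ hcomm z v hv hv2
  -- bound on α
  obtain ⟨u', hu', hu'2⟩ := kron_left_eig S' α u hu hu2
  have hα : α.re ≤ q * ε :=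
    part1 α ((charpoly_isRoot_iff S' α).mpr ⟨u', hu', hu'2⟩)
  -- eigenvalue of H'
  have hμC : (μ : ℂ) ≠ 0 := by
    simpa using hμpos.ne'
  have hw3 : (H' ⊗ₖ (1 : Matrix (Fin q) (Fin q) ℂ)) *ᵥ w = ((α - z) / μ) • w := by
    have hsm : (-(μ : ℂ)) • ((H' ⊗ₖ (1 : Matrix (Fin q) (Fin q) ℂ)) *ᵥ w) = (z - α) • w := by
      rw [← Matrix.smul_mulVec]; exact hw2
    funext p
    have hp := congrFun hsm p
    simp only [Pi.smul_apply, smul_eq_mul, neg_mul] at hp ⊢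
    field_simp
    linear_combination -hp
  obtain ⟨u'', hu'', hu''2⟩ := kron_right_eig H' ((α - z) / μ) w hw hw3
  have hν : ε₁ ^ N / ((N : ℝ) * (2 * ε₂) ^ (N - 1)) ≤ ((α - z) / (μ : ℂ)).re :=
    hH _ ((charpoly_isRoot_iff H' _).mpr ⟨u'', hu'', hu''2⟩)
  have hz' : z = α - (μ : ℂ) * ((α - z) / (μ : ℂ)) := by
    field_simp
    ring
  have hre : z.re = α.re - μ * ((α - z) / (μ : ℂ)).re := by
    conv_lhs => rw [hz']
    simp [Complex.sub_re, Complex.mul_re]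
  have hmono : μ * (ε₁ ^ N / ((N : ℝ) * (2 * ε₂) ^ (N - 1))) ≤ μ * ((α - z) / (μ : ℂ)).re :=
    mul_le_mul_of_nonneg_left hν hμpos.le
  rw [hre]
  linarith
end

section
/- Hurwitz condition under strict diagonal dominance (Remark following Proposition 1, inequality (31.444)). Let N, q ≥ 1, let H ∈ ℝ^{N×N} and S ∈ ℝ^{q×q} be real matrices, and let ε̄ > 0 be such that H_{ii} − Σ_{j≠i}|H_{ij}| ≥ ε̄ for every i (strict diagonal dominance). If μ ≥ 0 is a real number such that μ·ε̄ > S_{kk} + Σ_{l≠k}|S_{kl}| for every index k, then the matrix I_N ⊗ S − μ (H ⊗ I_q) is Hurwitz. -/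
open Matrix
open scoped Kronecker

/-- A root of the characteristic polynomial of a matrix over a field is an
eigenvalue of the associated linear map. -/
lemma root_charpoly_hasEigenvalue {n : Type} [Fintype n] [DecidableEq n]
    {K : Type} [Field K] {M : Matrix n n K} {z : K}
    (h : M.charpoly.IsRoot z) :
    Module.End.HasEigenvalue (Matrix.toLin' M) z := by
  have hdet : (Matrix.scalar n z - M).det = 0 := by
    have h' := h
    rw [Polynomial.IsRoot, Matrix.charpoly, eval_det, matPolyEquiv_charmatrix] at h'
    simpa using h'
  obtain ⟨v, hv0, hv⟩ := Matrix.exists_mulVec_eq_zero_iff.mpr hdet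
  have hMv : M.mulVec v = z • v := by
    have : (Matrix.scalar n z).mulVec v - M.mulVec v = 0 := by
      rw [← Matrix.sub_mulVec]; exact hv
    have h2 : (Matrix.scalar n z).mulVec v = z • v := by
      simp [Matrix.scalar, Matrix.mulVec_smul, ← Matrix.smul_eq_diagonal_mul]
      ext i
      simp [Matrix.mulVec_diagonal]
    rw [h2] at this
    exact (sub_eq_zero.mp this).symm
  exact Module.End.hasEigenvalue_of_hasEigenvector
    ⟨Module.End.mem_eigenspace_iff.mpr (by rw [Matrix.toLin'_apply, hMv]), hv0⟩

/-- Hurwitz condition under strict diagonal dominance of `H`: if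
`H_{ii} − Σ_{j≠i}|H_{ij}| ≥ ε̄ > 0` for every `i` and `μ ≥ 0` satisfies
`μ ε̄ > S_{kk} + Σ_{l≠k}|S_{kl}|` for every `k`, then
`I_N ⊗ S − μ (H ⊗ I_q)` is Hurwitz. -/
theorem stmt_7 (N q : ℕ) (hN : 1 ≤ N) (hq : 1 ≤ q)
    (H : Matrix (Fin N) (Fin N) ℝ) (S : Matrix (Fin q) (Fin q) ℝ)
    (ε : ℝ) (hε : 0 < ε)
    (hdom : ∀ i : Fin N, ε ≤ H i i - ∑ j ∈ Finset.univ.erase i, |H i j|)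
    (μ : ℝ) (hμ0 : 0 ≤ μ)
    (hμ : ∀ k : Fin q, S k k + ∑ l ∈ Finset.univ.erase k, |S k l| < μ * ε) :
    IsHurwitz ((1 : Matrix (Fin N) (Fin N) ℝ) ⊗ₖ S
      - μ • (H ⊗ₖ (1 : Matrix (Fin q) (Fin q) ℝ))) := by
  intro z hz
  set M₀ : Matrix (Fin N × Fin q) (Fin N × Fin q) ℝ :=
    (1 : Matrix (Fin N) (Fin N) ℝ) ⊗ₖ S - μ • (H ⊗ₖ (1 : Matrix (Fin q) (Fin q) ℝ)) with hM₀
  have hev := root_charpoly_hasEigenvalue hz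
  obtain ⟨⟨i, k⟩, hball⟩ := eigenvalue_mem_ball hev
  -- the entries of the row (i,k)
  have hentry : ∀ j l, M₀ (i, k) (j, l)
      = (if i = j then S k l else 0) - μ * (H i j * if k = l then 1 else 0) := by
    intro j l
    simp [hM₀, Matrix.sub_apply, Matrix.smul_apply, Matrix.kroneckerMap_apply,
      Matrix.one_apply, ite_mul, smul_eq_mul]
  have hnorm : ∀ p : Fin N × Fin q,
      ‖(M₀.map Complex.ofReal) (i, k) p‖ = |M₀ (i, k) p| := by
    intro p
    rw [Matrix.map_apply, Complex.norm_real, Real.norm_eq_abs]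
  -- total row sum of absolute values
  have htot : ∑ p : Fin N × Fin q, |M₀ (i, k) p|
      = |S k k - μ * H i i| + ((∑ l ∈ Finset.univ.erase k, |S k l|)
        + μ * ∑ j ∈ Finset.univ.erase i, |H i j|) := by
    rw [Fintype.sum_prod_type]
    rw [← Finset.add_sum_erase _ _ (Finset.mem_univ i)]
    have h1 : ∑ l : Fin q, |M₀ (i, k) (i, l)|
        = |S k k - μ * H i i| + ∑ l ∈ Finset.univ.erase k, |S k l| := by
      rw [← Finset.add_sum_erase _ _ (Finset.mem_univ k)]
      congr 1
      · simp [hentry]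
      · refine Finset.sum_congr rfl fun l hl => ?_
        have hlk : ¬ (k = l) := fun h => (Finset.mem_erase.mp hl).1 h.symm
        simp [hentry, hlk]
    have h2 : ∀ j ∈ Finset.univ.erase i, ∑ l : Fin q, |M₀ (i, k) (j, l)| = μ * |H i j| := by
      intro j hj
      have hij : ¬ (i = j) := fun h => (Finset.mem_erase.mp hj).1 h.symm
      have : ∀ l, |M₀ (i, k) (j, l)| = if k = l then μ * |H i j| else 0 := by
        intro l
        rw [hentry, if_neg hij]
        by_cases h : k = l
        · simp [h, abs_mul, abs_of_nonneg hμ0]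
        · simp [h]
      simp [this]
    rw [h1, Finset.sum_congr rfl h2, ← Finset.mul_sum]
    ring
  have hthe : |M₀ (i, k) (i, k)| = |S k k - μ * H i i| := by simp [hentry]
  have hsum : ∑ p ∈ Finset.univ.erase ((i, k) : Fin N × Fin q), |M₀ (i, k) p|
      = (∑ l ∈ Finset.univ.erase k, |S k l|) + μ * ∑ j ∈ Finset.univ.erase i, |H i j| := by
    rw [Finset.sum_erase_eq_sub (Finset.mem_univ _), htot, hthe]
    ring
  -- Gershgorin bound on the real part
  rw [Metric.mem_closedBall, Complex.dist_eq] at hball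
  have hradius : ∑ p ∈ Finset.univ.erase ((i, k) : Fin N × Fin q),
      ‖(M₀.map Complex.ofReal) (i, k) p‖
      = (∑ l ∈ Finset.univ.erase k, |S k l|) + μ * ∑ j ∈ Finset.univ.erase i, |H i j| := by
    rw [Finset.sum_congr rfl fun p _ => hnorm p, hsum]
  rw [hradius] at hball
  have hdiag : ((M₀.map Complex.ofReal) (i, k) (i, k)).re = S k k - μ * H i i := by
    rw [Matrix.map_apply, Complex.ofReal_re, hentry]; simp
  have hre : z.re - ((M₀.map Complex.ofReal) (i, k) (i, k)).re
      ≤ ‖z - (M₀.map Complex.ofReal) (i, k) (i, k)‖ := by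
    calc z.re - ((M₀.map Complex.ofReal) (i, k) (i, k)).re
        = (z - (M₀.map Complex.ofReal) (i, k) (i, k)).re := by simp [Complex.sub_re]
      _ ≤ |(z - (M₀.map Complex.ofReal) (i, k) (i, k)).re| := le_abs_self _
      _ ≤ ‖z - (M₀.map Complex.ofReal) (i, k) (i, k)‖ := Complex.abs_re_le_norm _
  have hz_le : z.re ≤ (S k k - μ * H i i)
      + ((∑ l ∈ Finset.univ.erase k, |S k l|) + μ * ∑ j ∈ Finset.univ.erase i, |H i j|) := by
    have := le_trans hre hball
    rw [hdiag] at this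
    linarith
  have h1 : μ * ε ≤ μ * (H i i - ∑ j ∈ Finset.univ.erase i, |H i j|) :=
    mul_le_mul_of_nonneg_left (hdom i) hμ0
  have h2 := hμ k
  nlinarith [hz_le]
end

section
/- Theorem 4 (data-driven transmission zero condition, sufficiency). Fix T, n, m, p, q ∈ ℕ with n, p ≥ 1. Let X ∈ ℝ^{n×T}, U ∈ ℝ^{m×T}, ℑ ∈ ℝ^{p×T}, V ∈ ℝ^{q×T}, D₁₁ ∈ ℝ^{T×T}, E ∈ ℝ^{n×q}, F ∈ ℝ^{p×q}, S ∈ ℝ^{q×q}, and set G := X·D₁₁ − E·V and Y := ℑ − F·V. Assume: (i) there exists X⁺ ∈ ℝ^{T×n} with X·X⁺ = Iₙ such that G·X⁺ is Hurwitz; and (ii) for every eigenvalue λ ∈ ℂ of S, the complex (n+p)×T matrix obtained by stacking G − λX on top of Y (real matrices viewed in ℂ) has rank n + p. Then for every quadruple (A,B,C,D) ∈ ℝ^{n×n}×ℝ^{n×m}×ℝ^{p×n}×ℝ^{p×m} consistent with the data, i.e. AX + BU = G and CX + DU = Y, the following hold: A + B·(U·X⁺) is Hurwitz, and for every eigenvalue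 λ ∈ ℂ of S the complex (n+p)×(n+m) block matrix [[A − λIₙ, B],[C, D]] has rank n + p (the transmission zero condition). -/
open Matrix

/-- Theorem 4 (data-driven transmission zero condition, sufficiency): if there is
a right inverse `X⁺` of `X` with `G X⁺` Hurwitz, and for every eigenvalue `λ` of
`S` the stacked data matrix `[G − λX ; Y]` has full row rank `n + p`, then every
system `(A,B,C,D)` consistent with the data satisfies: `A + B (U X⁺)` is Hurwitz
and the transmission zero condition `rank [[A − λI, B],[C, D]] = n + p` holds for
every eigenvalue `λ` of `S`. -/
theorem stmt_8 (T n m p q : ℕ) (hn : 1 ≤ n) (hp : 1 ≤ p)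
    (X : Matrix (Fin n) (Fin T) ℝ) (U : Matrix (Fin m) (Fin T) ℝ)
    (Im : Matrix (Fin p) (Fin T) ℝ) (V : Matrix (Fin q) (Fin T) ℝ)
    (D11 : Matrix (Fin T) (Fin T) ℝ)
    (E : Matrix (Fin n) (Fin q) ℝ) (F : Matrix (Fin p) (Fin q) ℝ)
    (S : Matrix (Fin q) (Fin q) ℝ)
    (G : Matrix (Fin n) (Fin T) ℝ) (hG : G = X * D11 - E * V)
    (Y : Matrix (Fin p) (Fin T) ℝ) (hY : Y = Im - F * V)
    (Xp : Matrix (Fin T) (Fin n) ℝ) (hXp : X * Xp = 1)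
    (hHur : IsHurwitz (G * Xp))
    (hzero : ∀ l : ℂ, (S.map Complex.ofReal).charpoly.IsRoot l →
      (Matrix.fromRows (G.map Complex.ofReal - l • X.map Complex.ofReal)
        (Y.map Complex.ofReal)).rank = n + p) :
    ∀ (A : Matrix (Fin n) (Fin n) ℝ) (B : Matrix (Fin n) (Fin m) ℝ)
      (C : Matrix (Fin p) (Fin n) ℝ) (D : Matrix (Fin p) (Fin m) ℝ),
      A * X + B * U = G → C * X + D * U = Y →
      IsHurwitz (A + B * (U * Xp)) ∧
      (∀ l : ℂ, (S.map Complex.ofReal).charpoly.IsRoot l →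
        (Matrix.fromBlocks (A.map Complex.ofReal - l • (1 : Matrix (Fin n) (Fin n) ℂ))
          (B.map Complex.ofReal) (C.map Complex.ofReal) (D.map Complex.ofReal)).rank
          = n + p) := by
  intro A B C D hABG hCDY
  have key : A + B * (U * Xp) = G * Xp := by
    have := congrArg (· * Xp) hABG
    simpa [Matrix.add_mul, Matrix.mul_assoc, hXp] using this
  have hmap : ∀ {a b c : ℕ} (M : Matrix (Fin a) (Fin b) ℝ) (N : Matrix (Fin b) (Fin c) ℝ),
      (M * N).map Complex.ofReal = M.map Complex.ofReal * N.map Complex.ofReal := by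
    intro a b c M N
    exact Matrix.map_mul (f := Complex.ofRealHom)
  constructor
  · rw [key]; exact hHur
  · intro l hl
    have hprod :
        (Matrix.fromBlocks (A.map Complex.ofReal - l • (1 : Matrix (Fin n) (Fin n) ℂ))
          (B.map Complex.ofReal) (C.map Complex.ofReal) (D.map Complex.ofReal)) *
          (Matrix.fromRows (X.map Complex.ofReal) (U.map Complex.ofReal)) =
        Matrix.fromRows (G.map Complex.ofReal - l • X.map Complex.ofReal)
          (Y.map Complex.ofReal) := by
      have h1 : A.map Complex.ofReal * X.map Complex.ofReal
          + B.map Complex.ofReal * U.map Complex.ofReal = G.map Complex.ofReal := by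
        rw [← hmap, ← hmap, ← Matrix.map_add _ Complex.ofReal_add, hABG]
      have h2 : C.map Complex.ofReal * X.map Complex.ofReal
          + D.map Complex.ofReal * U.map Complex.ofReal = Y.map Complex.ofReal := by
        rw [← hmap, ← hmap, ← Matrix.map_add _ Complex.ofReal_add, hCDY]
      rw [Matrix.fromBlocks_mul_fromRows, Matrix.sub_mul, Matrix.smul_mul, Matrix.one_mul,
        sub_add_eq_add_sub, h1, h2]
    have h1 := hzero l hl
    rw [← hprod] at h1
    refine le_antisymm ((Matrix.rank_le_card_height _).trans (by simp)) ?_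
    exact le_trans (le_of_eq h1.symm) (Matrix.rank_mul_le_left _ _)
end

section
/- Theorem 5, sufficiency direction (data-driven regulator equations). Fix T, n, m, p, q ∈ ℕ. Let X ∈ ℝ^{n×T}, U ∈ ℝ^{m×T}, ℑ ∈ ℝ^{p×T}, V ∈ ℝ^{q×T}, D₁₁ ∈ ℝ^{T×T}, E ∈ ℝ^{n×q}, F ∈ ℝ^{p×q}, S ∈ ℝ^{q×q}, and set G := X·D₁₁ − E·V and Y := ℑ − F·V. Suppose M ∈ ℝ^{T×q} solves the data-driven regulator equations G·M = X·M·S − E and Y·M = −F. Then for every quadruple (A,B,C,D) with AX + BU = G and CX + DU = Y, the matrices Π := X·M and Γ := U·M solve the regulator equations Π·S = A·Π + B·Γ + E and 0 = C·Π + D·Γ + F. Moreover, for any K₁ ∈ ℝ^{m×n}, the matrix K₂ := (U − K₁·X)·M satisfies Γ = K₁·Π + K₂. -/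
open Matrix

/-- Theorem 5, sufficiency direction: if `M` solves the data-driven regulator
equations, then for every system `(A,B,C,D)` consistent with the data, the
matrices `Π = X M` and `Γ = U M` solve the regulator equations, and
`K₂ = (U − K₁ X) M` satisfies `Γ = K₁ Π + K₂` for any `K₁`. -/
theorem stmt_9 (T n m p q : ℕ)
    (X : Matrix (Fin n) (Fin T) ℝ) (U : Matrix (Fin m) (Fin T) ℝ)
    (Im : Matrix (Fin p) (Fin T) ℝ) (V : Matrix (Fin q) (Fin T) ℝ)
    (D11 : Matrix (Fin T) (Fin T) ℝ)
    (E : Matrix (Fin n) (Fin q) ℝ) (F : Matrix (Fin p) (Fin q) ℝ)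
    (S : Matrix (Fin q) (Fin q) ℝ)
    (G : Matrix (Fin n) (Fin T) ℝ) (hG : G = X * D11 - E * V)
    (Y : Matrix (Fin p) (Fin T) ℝ) (hY : Y = Im - F * V)
    (M : Matrix (Fin T) (Fin q) ℝ)
    (hM1 : G * M = X * M * S - E) (hM2 : Y * M = -F) :
    ∀ (A : Matrix (Fin n) (Fin n) ℝ) (B : Matrix (Fin n) (Fin m) ℝ)
      (C : Matrix (Fin p) (Fin n) ℝ) (D : Matrix (Fin p) (Fin m) ℝ),
      A * X + B * U = G → C * X + D * U = Y →
      (X * M) * S = A * (X * M) + B * (U * M) + E ∧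
      (0 : Matrix (Fin p) (Fin q) ℝ) = C * (X * M) + D * (U * M) + F ∧
      (∀ K₁ : Matrix (Fin m) (Fin n) ℝ,
        U * M = K₁ * (X * M) + (U - K₁ * X) * M) := by
  intro A B C D hABG hCDY
  refine ⟨?_, ?_, ?_⟩
  · have h : (A * X + B * U) * M = X * M * S - E := by rw [hABG, hM1]
    rw [Matrix.add_mul, Matrix.mul_assoc, Matrix.mul_assoc] at h
    rw [eq_sub_iff_add_eq] at h
    exact h.symm
  · have h : (C * X + D * U) * M = -F := by rw [hCDY, hM2]
    rw [Matrix.add_mul, Matrix.mul_assoc, Matrix.mul_assoc] at h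
    rw [h]; abel
  · intro K₁
    rw [Matrix.sub_mul, Matrix.mul_assoc]
    abel
end

section
/- Corollary 1 (data-driven output synchronization with unknown leader, sufficiency). Fix T, n, m, p, n₀ ∈ ℕ. Let X ∈ ℝ^{n×T}, U ∈ ℝ^{m×T}, Y ∈ ℝ^{p×T} be the follower data, let X₀ ∈ ℝ^{n₀×T}, Y₀ ∈ ℝ^{p×T} be the leader data, and let D₁₁ ∈ ℝ^{T×T}. Suppose X₀ admits a right inverse X₀⁺ ∈ ℝ^{T×n₀} with X₀·X₀⁺ = I_{n₀}, and suppose M ∈ ℝ^{T×n₀} solves X·D₁₁·M = X·M·(X₀·D₁₁·X₀⁺) and Y·M = Y₀·X₀⁺. Then for every follower quadruple (A,B,C,D) with AX + BU = X·D₁₁ and CX + DU = Y, and every leader pair (A₀, C₀) with A₀·X₀ = X₀·D₁₁ and C₀·X₀ = Y₀, the matrices Π := X·M and Γ := U·M solve the output-synchronization regulator equations Π·A₀ = A·Π + B·Γ and C₀ = C·Π + D·Γ. -/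
open Matrix

/-- Corollary 1 (data-driven output synchronization with unknown leader,
sufficiency): if `X₀` has a right inverse `X₀⁺` and `M` solves the data-driven
synchronization regulator equations, then for every consistent follower
`(A,B,C,D)` and every consistent leader `(A₀,C₀)`, the matrices `Π = X M` and
`Γ = U M` solve `Π A₀ = A Π + B Γ` and `C₀ = C Π + D Γ`. -/
theorem stmt_11 (T n m p n₀ : ℕ)
    (X : Matrix (Fin n) (Fin T) ℝ) (U : Matrix (Fin m) (Fin T) ℝ)
    (Y : Matrix (Fin p) (Fin T) ℝ)
    (X₀ : Matrix (Fin n₀) (Fin T) ℝ) (Y₀ : Matrix (Fin p) (Fin T) ℝ)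
    (D11 : Matrix (Fin T) (Fin T) ℝ)
    (X₀p : Matrix (Fin T) (Fin n₀) ℝ) (hX₀p : X₀ * X₀p = 1)
    (M : Matrix (Fin T) (Fin n₀) ℝ)
    (hM1 : X * D11 * M = X * M * (X₀ * D11 * X₀p))
    (hM2 : Y * M = Y₀ * X₀p) :
    ∀ (A : Matrix (Fin n) (Fin n) ℝ) (B : Matrix (Fin n) (Fin m) ℝ)
      (C : Matrix (Fin p) (Fin n) ℝ) (D : Matrix (Fin p) (Fin m) ℝ)
      (A₀ : Matrix (Fin n₀) (Fin n₀) ℝ) (C₀ : Matrix (Fin p) (Fin n₀) ℝ),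
      A * X + B * U = X * D11 → C * X + D * U = Y →
      A₀ * X₀ = X₀ * D11 → C₀ * X₀ = Y₀ →
      (X * M) * A₀ = A * (X * M) + B * (U * M) ∧
      C₀ = C * (X * M) + D * (U * M) := by
  intro A B C D A₀ C₀ hF1 hF2 hL1 hL2
  have hA0 : A₀ = X₀ * D11 * X₀p := by
    calc A₀ = A₀ * (X₀ * X₀p) := by rw [hX₀p, Matrix.mul_one]
    _ = (A₀ * X₀) * X₀p := by rw [Matrix.mul_assoc]
    _ = X₀ * D11 * X₀p := by rw [hL1]
  have hC0 : C₀ = Y₀ * X₀p := by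
    calc C₀ = C₀ * (X₀ * X₀p) := by rw [hX₀p, Matrix.mul_one]
    _ = (C₀ * X₀) * X₀p := by rw [Matrix.mul_assoc]
    _ = Y₀ * X₀p := by rw [hL2]
  constructor
  · calc (X * M) * A₀ = X * M * (X₀ * D11 * X₀p) := by rw [hA0]
    _ = X * D11 * M := hM1.symm
    _ = (A * X + B * U) * M := by rw [hF1]
    _ = A * (X * M) + B * (U * M) := by rw [Matrix.add_mul, Matrix.mul_assoc, Matrix.mul_assoc]
  · calc C₀ = Y₀ * X₀p := hC0
    _ = Y * M := hM2.symm
    _ = (C * X + D * U) * M := by rw [hF2]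
    _ = C * (X * M) + D * (U * M) := by rw [Matrix.add_mul, Matrix.mul_assoc, Matrix.mul_assoc]
end
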